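/- For integers 1 ≤ t ≤ k < n, let F be a fixed (n-k)-dimensional subspace of F_q^n. The set of all k-dimensional subspaces of F_q^n intersecting F trivially has size q^{(n-k)k}, and every t-dimensional subspace of F_q^n is contained in at most q^{(n-k)(k-t)} of its members. Hence A_q(n,k,t;q^{(n-k)(k-t)}) ≥ q^{(n-k)k}. -/

import Mathlib

open scoped Classical

def gaussBinom (q : ℕ) : ℕ → ℕ → ℕ
  | _, 0 => 1
  | 0, _ + 1 => 0
  | n + 1, k + 1 => gaussBinom q n k + q ^ (k + 1) * gaussBinom q n (k + 1)

def IsPacking (F : Type) [Field F] [Fintype F] (n k t lam : ℕ)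
    (S : Finset (Submodule F (Fin n → F))) : Prop :=
  (∀ U ∈ S, Module.finrank F U = k) ∧
    ∀ T : Submodule F (Fin n → F), Module.finrank F T = t →
      (S.filter fun U => T ≤ U).card ≤ lam

noncomputable def packingNumber (F : Type) [Field F] [Fintype F] (n k t lam : ℕ) : ℕ :=
  sSup {m | ∃ S : Finset (Submodule F (Fin n → F)), IsPacking F n k t lam S ∧ S.card = m}

def IsRPacking (F : Type) [Field F] [Fintype F] (n k t lam : ℕ)
    (S : Multiset (Submodule F (Fin n → F))) : Prop :=
  (∀ U ∈ S, Module.finrank F U = k) ∧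
    ∀ T : Submodule F (Fin n → F), Module.finrank F T = t →
      (S.countP fun U => T ≤ U) ≤ lam

noncomputable def rPackingNumber (F : Type) [Field F] [Fintype F] (n k t lam : ℕ) : ℕ :=
  sSup {m | ∃ S : Multiset (Submodule F (Fin n → F)), IsRPacking F n k t lam S ∧ Multiset.card S = m}

section Aux

open Module Submodule

variable {F : Type} [Field F] [Fintype F]

instance finiteLM (V W : Type) [AddCommGroup V] [Module F V] [AddCommGroup W] [Module F W]
    [Finite V] [Finite W] : Finite (V →ₗ[F] W) :=
  Finite.of_injective (fun f => (f : V → W)) DFunLike.coe_injective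

lemma card_linearMap_aux (V W : Type) [AddCommGroup V] [Module F V] [AddCommGroup W] [Module F W]
    [FiniteDimensional F V] [FiniteDimensional F W] :
    Nat.card (V →ₗ[F] W) = Fintype.card F ^ (finrank F V * finrank F W) := by
  classical
  have e := LinearMap.toMatrix (Module.finBasis F V) (Module.finBasis F W)
  have h1 : Nat.card (V →ₗ[F] W)
      = Nat.card (Matrix (Fin (finrank F W)) (Fin (finrank F V)) F) := Nat.card_congr e.toEquiv
  have h2 : Nat.card (Matrix (Fin (finrank F W)) (Fin (finrank F V)) F)
      = Nat.card (Fin (finrank F W) → Fin (finrank F V) → F) := rfl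
  rw [h1, h2, Nat.card_eq_fintype_card]
  simp [Fintype.card_fun, ← pow_mul, mul_comm]

lemma card_vanishing_le (V W : Type) [AddCommGroup V] [Module F V] [AddCommGroup W] [Module F W]
    [FiniteDimensional F V] [FiniteDimensional F W] (P : Submodule F V) :
    Nat.card {g : V →ₗ[F] W // ∀ z ∈ P, g z = 0} ≤
      Fintype.card F ^ ((finrank F V - finrank F P) * finrank F W) := by
  classical
  obtain ⟨D, hD⟩ := Submodule.exists_isCompl P
  have hsum := Submodule.finrank_add_eq_of_isCompl hD
  have hPle : finrank F P ≤ finrank F V := P.finrank_le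
  have hDrk : finrank F D = finrank F V - finrank F P := by omega
  haveI : Finite V := Module.finite_of_finite F
  haveI : Finite W := Module.finite_of_finite F
  have hinj : Function.Injective
      (fun g : {g : V →ₗ[F] W // ∀ z ∈ P, g z = 0} => g.1 ∘ₗ D.subtype) := by
    intro g₁ g₂ h
    apply Subtype.ext; apply LinearMap.ext; intro v
    have hv : v ∈ P ⊔ D := by rw [hD.sup_eq_top]; trivial
    obtain ⟨a, ha, b, hb, hab⟩ := Submodule.mem_sup.1 hv
    have hfun : g₁.1 b = g₂.1 b := by
      have := congrFun (congrArg (DFunLike.coe) h) ⟨b, hb⟩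
      simpa using this
    rw [← hab, map_add, map_add, g₁.2 a ha, g₂.2 a ha, hfun]
  calc Nat.card {g : V →ₗ[F] W // ∀ z ∈ P, g z = 0}
      ≤ Nat.card (D →ₗ[F] W) := Nat.card_le_card_of_injective _ hinj
    _ = Fintype.card F ^ (finrank F D * finrank F W) := card_linearMap_aux D W
    _ = Fintype.card F ^ ((finrank F V - finrank F P) * finrank F W) := by rw [hDrk]

end Aux

open Module Submodule in
theorem stmt4 (q n k t : ℕ) (F : Type) [Field F] [Fintype F] (hq : Fintype.card F = q)
    (ht : 1 ≤ t) (htk : t ≤ k) (hkn : k < n)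
    (Fs : Submodule F (Fin n → F)) (hFs : Module.finrank F Fs = n - k) :
    Nat.card {U : Submodule F (Fin n → F) // Module.finrank F U = k ∧ U ⊓ Fs = ⊥} =
        q ^ ((n - k) * k) ∧
      (∀ T : Submodule F (Fin n → F), Module.finrank F T = t →
        Nat.card {U : Submodule F (Fin n → F) //
          (Module.finrank F U = k ∧ U ⊓ Fs = ⊥) ∧ T ≤ U} ≤ q ^ ((n - k) * (k - t))) ∧
      q ^ ((n - k) * k) ≤ packingNumber F n k t (q ^ ((n - k) * (k - t))) := by
  classical
  subst hq
  have hn : finrank F (Fin n → F) = n := Module.finrank_fin_fun F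
  obtain ⟨C, hC⟩ := Submodule.exists_isCompl Fs
  have hsum := Submodule.finrank_add_eq_of_isCompl hC
  have hCk : finrank F C = k := by rw [hFs, hn] at hsum; omega
  have hiff : ∀ U : Submodule F (Fin n → F),
      (finrank F U = k ∧ U ⊓ Fs = ⊥) ↔ IsCompl Fs U := by
    intro U
    constructor
    · rintro ⟨h1, h2⟩
      have h2' : Fs ⊓ U = ⊥ := by rwa [inf_comm] at h2
      refine ⟨disjoint_iff.2 h2', codisjoint_iff.2 ?_⟩
      apply Submodule.eq_top_of_finrank_eq
      have hh := Submodule.finrank_sup_add_finrank_inf_eq Fs U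
      rw [h2', finrank_bot, hFs, h1] at hh
      rw [hn]
      omega
    · intro h
      have h1 := Submodule.finrank_add_eq_of_isCompl h
      rw [hFs, hn] at h1
      exact ⟨by omega, by rw [inf_comm]; exact disjoint_iff.1 h.disjoint⟩
  let projEquiv : {f : (Fin n → F) →ₗ[F] Fs // ∀ x : Fs, f ↑x = x} ≃ (C →ₗ[F] Fs) :=
  { toFun := fun f => f.1 ∘ₗ C.subtype
    invFun := fun g => ⟨Fs.projectionOnto C hC + g ∘ₗ C.projectionOnto Fs hC.symm, by
      intro x
      simp [Submodule.linearProjOfIsCompl_apply_left hC x,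
        Submodule.linearProjOfIsCompl_apply_right]⟩
    left_inv := fun f => by
      apply Subtype.ext; apply LinearMap.ext; intro v
      have hdec : (Fs.projectionOnto C hC v : Fin n → F) + (C.projectionOnto Fs hC.symm v : Fin n → F) = v :=
        Submodule.projection_add_projection_eq_self hC v
      have h1 : f.1 ((Fs.projectionOnto C hC v : Fin n → F))
          = Fs.projectionOnto C hC v := f.2 _
      simp only [LinearMap.add_apply, LinearMap.coe_comp, Function.comp_apply,
        Submodule.coe_subtype]
      rw [← h1, ← map_add, hdec]
    right_inv := fun g => by
      apply LinearMap.ext; intro x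
      simp [Submodule.linearProjOfIsCompl_apply_right,
        Submodule.linearProjOfIsCompl_apply_left hC.symm x] }
  let e : {U : Submodule F (Fin n → F) // finrank F U = k ∧ U ⊓ Fs = ⊥} ≃ (C →ₗ[F] Fs) :=
    (Equiv.subtypeEquivRight hiff).trans (Fs.isComplEquivProj.trans projEquiv)
  have hcard1 : Nat.card {U : Submodule F (Fin n → F) // finrank F U = k ∧ U ⊓ Fs = ⊥}
      = Fintype.card F ^ ((n - k) * k) := by
    rw [Nat.card_congr e, card_linearMap_aux, hCk, hFs, Nat.mul_comm k (n - k)]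
  have hcard2 : ∀ T : Submodule F (Fin n → F), finrank F T = t →
      Nat.card {U : Submodule F (Fin n → F) //
        (finrank F U = k ∧ U ⊓ Fs = ⊥) ∧ T ≤ U} ≤ Fintype.card F ^ ((n - k) * (k - t)) := by
    intro T hT
    by_cases hA : Nonempty {U : Submodule F (Fin n → F) //
        (finrank F U = k ∧ U ⊓ Fs = ⊥) ∧ T ≤ U}
    · obtain ⟨U₀⟩ := hA
      set πC := C.projectionOnto Fs hC.symm with hπC
      set T' : Submodule F C := T.map πC with hT'def
      have key : ∀ (U : {U : Submodule F (Fin n → F) //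
            (finrank F U = k ∧ U ⊓ Fs = ⊥) ∧ T ≤ U}) (y : Fin n → F), y ∈ T →
          e ⟨U.1, U.2.1⟩ (πC y) = - Fs.projectionOnto C hC y := by
        intro U y hy
        have hdec : (Fs.projectionOnto C hC y : Fin n → F) + (C.projectionOnto Fs hC.symm y : Fin n → F) = y :=
          Submodule.projection_add_projection_eq_self hC y
        have h0 : Fs.projectionOnto U.1 ((hiff U.1).1 U.2.1) y = 0 :=
          Submodule.projectionOnto_apply_of_mem_right _ (U.2.2 hy)
        have hcoe : ((πC y : Fin n → F)) = y - ↑(Fs.projectionOnto C hC y) :=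
          eq_sub_of_add_eq' hdec
        have hrfl : e ⟨U.1, U.2.1⟩ (πC y)
            = Fs.projectionOnto U.1 ((hiff U.1).1 U.2.1) ↑(πC y) := rfl
        rw [hrfl, hcoe, map_sub, h0, Submodule.linearProjOfIsCompl_apply_left]
        rw [zero_sub]
      have hvan : ∀ U : {U : Submodule F (Fin n → F) //
            (finrank F U = k ∧ U ⊓ Fs = ⊥) ∧ T ≤ U},
          ∀ z ∈ T', (e ⟨U.1, U.2.1⟩ - e ⟨U₀.1, U₀.2.1⟩) z = 0 := by
        intro U z hz
        obtain ⟨y, hy, rfl⟩ := Submodule.mem_map.1 hz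
        simp [LinearMap.sub_apply, key U y hy, key U₀ y hy]
      have hinj : Function.Injective (fun U : {U : Submodule F (Fin n → F) //
            (finrank F U = k ∧ U ⊓ Fs = ⊥) ∧ T ≤ U} =>
          (⟨e ⟨U.1, U.2.1⟩ - e ⟨U₀.1, U₀.2.1⟩, hvan U⟩ :
            {g : C →ₗ[F] Fs // ∀ z ∈ T', g z = 0})) := by
        intro U V h
        have h1 : e ⟨U.1, U.2.1⟩ - e ⟨U₀.1, U₀.2.1⟩ = e ⟨V.1, V.2.1⟩ - e ⟨U₀.1, U₀.2.1⟩ :=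
          congrArg Subtype.val h
        have h2 : e ⟨U.1, U.2.1⟩ = e ⟨V.1, V.2.1⟩ := by
          apply LinearMap.ext; intro x
          have hx := congrFun (congrArg DFunLike.coe h1) x
          simp only [LinearMap.sub_apply] at hx
          exact sub_left_inj.1 hx
        have h3 := e.injective h2
        have h4 : U.1 = V.1 := by simpa using h3
        exact Subtype.ext h4
      have hrkT' : finrank F T' = t := by
        have hker : LinearMap.ker (πC ∘ₗ T.subtype) = ⊥ := by
          rw [LinearMap.ker_eq_bot']
          intro x hx
          have hxFs : (x : Fin n → F) ∈ Fs := by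
            have hk := Submodule.linearProjOfIsCompl_ker hC.symm
            have : (x : Fin n → F) ∈ LinearMap.ker πC := by
              simpa using hx
            rwa [hπC, hk] at this
          have hxU : (x : Fin n → F) ∈ U₀.1 := U₀.2.2 x.2
          have : (x : Fin n → F) ∈ U₀.1 ⊓ Fs := ⟨hxU, hxFs⟩
          rw [U₀.2.1.2] at this
          exact Subtype.ext (by simpa using this)
        have hinjf : Function.Injective (πC ∘ₗ T.subtype) := LinearMap.ker_eq_bot.1 hker
        have hrange : LinearMap.range (πC ∘ₗ T.subtype) = T' := by
          rw [LinearMap.range_comp, Submodule.range_subtype]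
        have hfr := LinearMap.finrank_range_of_inj hinjf
        rw [hrange, hT] at hfr
        exact hfr
      calc Nat.card {U : Submodule F (Fin n → F) //
            (finrank F U = k ∧ U ⊓ Fs = ⊥) ∧ T ≤ U}
          ≤ Nat.card {g : C →ₗ[F] Fs // ∀ z ∈ T', g z = 0} :=
            Nat.card_le_card_of_injective _ hinj
        _ ≤ Fintype.card F ^ ((finrank F C - finrank F T') * finrank F Fs) :=
            card_vanishing_le C Fs T'
        _ = Fintype.card F ^ ((n - k) * (k - t)) := by
            rw [hCk, hrkT', hFs, Nat.mul_comm (k - t) (n - k)]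
    · haveI := not_nonempty_iff.1 hA
      rw [Nat.card_of_isEmpty]
      exact Nat.zero_le _
  refine ⟨hcard1, hcard2, ?_⟩
  haveI : Fintype (Submodule F (Fin n → F)) := inferInstance
  set S : Finset (Submodule F (Fin n → F)) :=
    Finset.univ.filter (fun U => finrank F U = k ∧ U ⊓ Fs = ⊥) with hSdef
  have hScard : S.card = Fintype.card F ^ ((n - k) * k) := by
    rw [← hcard1, Nat.card_eq_fintype_card, Fintype.card_subtype]
  have hpack : IsPacking F n k t (Fintype.card F ^ ((n - k) * (k - t))) S := by
    constructor
    · intro U hU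
      exact ((Finset.mem_filter.1 hU).2).1
    · intro T hT
      have hfc : (S.filter fun U => T ≤ U).card = Nat.card {U : Submodule F (Fin n → F) //
          (finrank F U = k ∧ U ⊓ Fs = ⊥) ∧ T ≤ U} := by
        rw [Nat.card_eq_fintype_card, Fintype.card_subtype, hSdef, Finset.filter_filter]
      rw [hfc]
      exact hcard2 T hT
  have hbdd : BddAbove {m | ∃ S' : Finset (Submodule F (Fin n → F)),
      IsPacking F n k t (Fintype.card F ^ ((n - k) * (k - t))) S' ∧ S'.card = m} := by
    refine ⟨Fintype.card (Submodule F (Fin n → F)), ?_⟩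
    rintro m ⟨S', _, rfl⟩
    exact Finset.card_le_univ S'
  exact le_csSup hbdd ⟨S, hpack, hScard⟩
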